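/- If linear maps Ψ_i : H → K satisfy ∑_i Ψ_i ρ Ψ_i† = F ρ F† for all ρ, then each Ψ_i is a scalar multiple of F: there exist complex numbers c_i with Ψ_i = c_i F and ∑_i |c_i|² = 1 (assuming F ≠ 0). -/

import Mathlib

open Matrix BigOperators

private lemma entry_lemma {h k : Type*} [Fintype h] [Fintype k] [DecidableEq h]
    (A B : Matrix k h ℂ) (a b : h) (p q : k) :
    (A * Matrix.single a b (1:ℂ) * Bᴴ) p q = A p a * star (B q b) := by
  simp [Matrix.mul_apply, Matrix.single, Matrix.conjTranspose_apply,
    Finset.mul_sum, Finset.sum_mul, ite_and, mul_comm, mul_assoc, mul_left_comm]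

/-- If `∑ i, Ψ i ρ (Ψ i)† = F ρ F†` for all `ρ` and `F ≠ 0`, then each `Ψ i` is
a scalar multiple `c i • F` of `F`, with `∑ i, |c i|² = 1`. -/
theorem stmt2 {h k ι : Type*} [Fintype h] [Fintype k] [Fintype ι]
    (Ψ : ι → Matrix k h ℂ) (F : Matrix k h ℂ) (hF : F ≠ 0)
    (hsum : ∀ ρ : Matrix h h ℂ, ∑ i, Ψ i * ρ * (Ψ i)ᴴ = F * ρ * Fᴴ) :
    ∃ c : ι → ℂ, (∀ i, Ψ i = c i • F) ∧ ∑ i, ‖c i‖ ^ 2 = 1 := by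
  classical
  -- entrywise identity
  have key : ∀ (p q : k) (a b : h),
      ∑ i, Ψ i p a * star (Ψ i q b) = F p a * star (F q b) := by
    intro p q a b
    have := congrFun (congrFun (hsum (Matrix.single a b 1)) p) q
    rw [Matrix.sum_apply] at this
    simpa [entry_lemma] using this
  -- a nonzero entry of F
  obtain ⟨p₀, a₀, h₀⟩ : ∃ p a, F p a ≠ 0 := by
    by_contra hc
    push_neg at hc
    exact hF (Matrix.ext fun p a => hc p a)
  set f₀ : ℂ := F p₀ a₀ with hf₀
  set c : ι → ℂ := fun i => Ψ i p₀ a₀ / f₀ with hc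
  refine ⟨c, ?_, ?_⟩
  · intro i
    ext p a
    -- show each residual vanishes via sum of squares = 0
    have hzero : ∑ j, Complex.normSq (Ψ j p a - (F p a / f₀) * Ψ j p₀ a₀) = 0 := by
      have expand : ∑ j, ((Complex.normSq (Ψ j p a - (F p a / f₀) * Ψ j p₀ a₀) : ℂ)) = 0 := by
        have : ∀ j, ((Complex.normSq (Ψ j p a - (F p a / f₀) * Ψ j p₀ a₀) : ℂ))
            = Ψ j p a * star (Ψ j p a)
              - (F p a / f₀) * (Ψ j p₀ a₀ * star (Ψ j p a))
              - star (F p a / f₀) * (Ψ j p a * star (Ψ j p₀ a₀))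
              + (F p a / f₀) * star (F p a / f₀) * (Ψ j p₀ a₀ * star (Ψ j p₀ a₀)) := by
          intro j
          rw [← Complex.mul_conj]
          simp only [map_sub, _root_.map_mul, Complex.star_def]
          ring
        rw [Finset.sum_congr rfl fun j _ => this j]
        simp only [Finset.sum_add_distrib, Finset.sum_sub_distrib, ← Finset.mul_sum]
        rw [key p p a a, key p₀ p a₀ a, key p p₀ a a₀, key p₀ p₀ a₀ a₀]
        have h₀' : (starRingEnd ℂ) f₀ ≠ 0 := by simpa using h₀
        simp only [← hf₀]
        field_simp
        ring
      have := congrArg Complex.re expand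
      simpa using this
    have hj : Complex.normSq (Ψ i p a - (F p a / f₀) * Ψ i p₀ a₀) = 0 := by
      have hnn : ∀ j ∈ Finset.univ, (0:ℝ) ≤ Complex.normSq (Ψ j p a - (F p a / f₀) * Ψ j p₀ a₀) :=
        fun j _ => Complex.normSq_nonneg _
      exact (Finset.sum_eq_zero_iff_of_nonneg hnn).1 hzero i (Finset.mem_univ i)
    have := Complex.normSq_eq_zero.1 hj
    have : Ψ i p a = (F p a / f₀) * Ψ i p₀ a₀ := by linear_combination this
    rw [Matrix.smul_apply, this, hc]
    field_simp
    rw [smul_eq_mul]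
    field_simp
  · have hdiag := key p₀ p₀ a₀ a₀
    have : ∑ i, ‖c i‖ ^ 2 = (∑ i, Complex.normSq (Ψ i p₀ a₀)) / Complex.normSq f₀ := by
      rw [Finset.sum_div]
      refine Finset.sum_congr rfl fun i _ => ?_
      rw [hc]
      simp only [Complex.normSq_eq_norm_sq]
      rw [norm_div]
      field_simp
    rw [this]
    have hsq : (∑ i, Complex.normSq (Ψ i p₀ a₀)) = Complex.normSq f₀ := by
      have : ((∑ i, Complex.normSq (Ψ i p₀ a₀) : ℝ) : ℂ) = (Complex.normSq f₀ : ℂ) := by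
        push_cast
        simpa [Complex.mul_conj] using hdiag
      exact_mod_cast this
    rw [hsq]
    field_simp [Complex.normSq_eq_zero.not.2 h₀]
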